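/- arXiv:2407.04137 — 3 statements merged into one kernel-verified Lean document; each statement's English description precedes it below -/
import Mathlib

section
/- Every autopolar conic body G ⊂ ℝ^d₊ has distance exactly 1 from the origin: inf{|x| : x ∈ G} = 1. -/
set_option maxHeartbeats 1000000


/-- The nonnegative orthant in ℝ^d. -/
def orthant (d : ℕ) : Set (EuclideanSpace ℝ (Fin d)) := {x | ∀ i, 0 ≤ x i}

/-- The polar of a subset of the orthant:
M* = {y ∈ ℝ^d₊ : (y,x) ≥ 1 for all x ∈ M}. -/
def polar {d : ℕ} (M : Set (EuclideanSpace ℝ (Fin d))) :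
    Set (EuclideanSpace ℝ (Fin d)) :=
  {y | y ∈ orthant d ∧ ∀ x ∈ M, 1 ≤ (inner ℝ y x : ℝ)}

/-- A conic body: a closed convex proper subset of the orthant whose intersection
with every interior ray is a ray. -/
def IsConicBody {d : ℕ} (G : Set (EuclideanSpace ℝ (Fin d))) : Prop :=
  IsClosed G ∧ Convex ℝ G ∧ G ⊆ orthant d ∧ G ≠ orthant d ∧
  ∀ v ∈ interior (orthant d),
    ∃ t₀ : ℝ, 0 < t₀ ∧
      G ∩ {x | ∃ t : ℝ, 0 ≤ t ∧ x = t • v} = {x | ∃ t : ℝ, t₀ ≤ t ∧ x = t • v}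

/-- Every autopolar conic body has distance exactly one from the origin. -/
theorem stmt_11 {d : ℕ} (G : Set (EuclideanSpace ℝ (Fin d)))
    (hG : IsConicBody G) (hauto : polar G = G) :
    sInf ((fun x => ‖x‖) '' G) = 1 := by
  obtain ⟨hclosed, hconv, hsub, hne, -⟩ := hG
  -- G is nonempty
  have hGne : G.Nonempty := by
    by_contra h
    rw [Set.not_nonempty_iff_eq_empty] at h
    apply hne
    rw [← hauto, h]
    ext y
    simp [polar]
  -- every element of G has norm at least 1
  have hlow : ∀ x ∈ G, 1 ≤ ‖x‖ := by
    intro x hx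
    have hx' : x ∈ polar G := by rw [hauto]; exact hx
    have h1 : (1 : ℝ) ≤ inner ℝ x x := hx'.2 x hx
    rw [real_inner_self_eq_norm_sq] at h1
    nlinarith [norm_nonneg x]
  -- minimizer of the norm on G
  obtain ⟨y, hyG, hy⟩ := hclosed.exists_infDist_eq_dist hGne 0
  haveI : Nonempty G := ⟨⟨y, hyG⟩⟩
  have hymin : ∀ x ∈ G, ‖y‖ ≤ ‖x‖ := by
    intro x hx
    have := Metric.infDist_le_dist_of_mem (x := (0 : EuclideanSpace ℝ (Fin d))) hx
    rw [hy] at this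
    simpa [dist_eq_norm] using this
  have hy1 : 1 ≤ ‖y‖ := hlow y hyG
  have hy0 : 0 < ‖y‖ := lt_of_lt_of_le one_pos hy1
  -- variational inequality: ∀ w ∈ G, ⟪y, w⟫ ≥ ‖y‖²
  have hiInf : ‖(0 : EuclideanSpace ℝ (Fin d)) - y‖ =
      ⨅ w : G, ‖(0 : EuclideanSpace ℝ (Fin d)) - w‖ := by
    apply le_antisymm
    · refine le_ciInf fun w => ?_
      rw [zero_sub, zero_sub, norm_neg, norm_neg]
      exact hymin w w.2
    · have hbdd : BddBelow (Set.range fun w : G =>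
          ‖(0 : EuclideanSpace ℝ (Fin d)) - (w : EuclideanSpace ℝ (Fin d))‖) := by
        refine ⟨0, ?_⟩
        rintro b ⟨w, rfl⟩
        exact norm_nonneg _
      exact ciInf_le hbdd ⟨y, hyG⟩
  have hvar := (norm_eq_iInf_iff_real_inner_le_zero hconv hyG).mp hiInf
  have hvar' : ∀ w ∈ G, ‖y‖ ^ 2 ≤ inner ℝ y w := by
    intro w hw
    have := hvar w hw
    rw [zero_sub, inner_neg_left, inner_sub_right, real_inner_self_eq_norm_sq] at this
    linarith
  -- the rescaled point lies in the polar
  have hz : (‖y‖ ^ 2)⁻¹ • y ∈ polar G := by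
    refine ⟨fun i => ?_, fun x hx => ?_⟩
    · have : ((‖y‖ ^ 2)⁻¹ • y) i = (‖y‖ ^ 2)⁻¹ * y i := rfl
      rw [this]
      exact mul_nonneg (inv_nonneg.mpr (by positivity)) (hsub hyG i)
    · rw [real_inner_smul_left]
      rw [inv_mul_eq_div, le_div_iff₀ (by positivity), one_mul]
      exact hvar' x hx
  have hzG : (‖y‖ ^ 2)⁻¹ • y ∈ G := by rw [← hauto]; exact hz
  have hznorm : ‖(‖y‖ ^ 2)⁻¹ • y‖ = ‖y‖⁻¹ := by
    rw [norm_smul, Real.norm_eq_abs, abs_of_nonneg (by positivity)]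
    field_simp
  have hle := hymin _ hzG
  rw [hznorm] at hle
  have hy_eq : ‖y‖ = 1 := by
    have h2 : ‖y‖ * ‖y‖ ≤ 1 := by
      rw [← mul_inv_cancel₀ (ne_of_gt hy0)]
      exact mul_le_mul_of_nonneg_left hle (le_of_lt hy0)
    nlinarith
  refine IsLeast.csInf_eq ⟨⟨y, hyG, hy_eq⟩, ?_⟩
  rintro b ⟨x, hx, rfl⟩
  exact hlow x hx
end

section
/- With the setup of the lifting theorem (V admissible splitting ℝ^d₊ into K₁, K₂; φ self-dual on K' = ℝ^d₊ ∩ V; f₁ an antinorm on K₁ with f₁|_{K'} = φ and f₁ ≤ Φ), define f₂(y) = inf_{x ∈ K₁} (y,x)/f₁(x) for y ∈ K₂. Then f₂ restricted to K' equals φ, and f₂(y) ≤ Φ(y) for all y ∈ K₂. -/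
/-- With the setup of the lifting theorem (admissible hyperplane
V = {x : x_i = μ x_j} splitting ℝ^d₊ into K₁ and K₂, φ a self-dual antinorm on
K' = ℝ^d₊ ∩ V, f₁ an antinorm on K₁ with f₁|_{K'} = φ and f₁ ≤ Φ = φ ∘ proj),
the function f₂(y) = inf_{x ∈ K₁, f₁(x) ≠ 0} (y,x)/f₁(x) coincides with φ on K'
and satisfies f₂ ≤ Φ on K₂. -/
theorem stmt_16 {d : ℕ} (i j : Fin d) (hij : i ≠ j) (μ : ℝ) (hμ : 0 ≤ μ)
    (proj : EuclideanSpace ℝ (Fin d) → EuclideanSpace ℝ (Fin d))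
    (hprojV : ∀ x, proj x i = μ * proj x j)
    (hprojorth : ∀ x, ∀ v : EuclideanSpace ℝ (Fin d),
      v i = μ * v j → (inner ℝ (x - proj x) v : ℝ) = 0)
    (φ f₁ : EuclideanSpace ℝ (Fin d) → ℝ)
    -- φ is a self-dual antinorm on K' = ℝ^d₊ ∩ V :
    (hφconc : ConcaveOn ℝ {x | x ∈ orthant d ∧ x i = μ * x j} φ)
    (hφhom : ∀ x ∈ {x | x ∈ orthant d ∧ x i = μ * x j}, ∀ c : ℝ, 0 ≤ c →
      φ (c • x) = c * φ x)
    (hφnn : ∀ x ∈ {x | x ∈ orthant d ∧ x i = μ * x j}, 0 ≤ φ x)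
    (hφpos : ∃ x ∈ {x | x ∈ orthant d ∧ x i = μ * x j}, 0 < φ x)
    (hφsd : ∀ y ∈ {x | x ∈ orthant d ∧ x i = μ * x j},
      sInf ((fun x => (inner ℝ y x : ℝ)) ''
        {x | (x ∈ orthant d ∧ x i = μ * x j) ∧ 1 ≤ φ x}) = φ y)
    -- f₁ is an antinorm on K₁ :
    (hf₁conc : ConcaveOn ℝ {x | x ∈ orthant d ∧ x i ≤ μ * x j} f₁)
    (hf₁hom : ∀ x ∈ {x | x ∈ orthant d ∧ x i ≤ μ * x j}, ∀ c : ℝ, 0 ≤ c →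
      f₁ (c • x) = c * f₁ x)
    (hf₁nn : ∀ x ∈ {x | x ∈ orthant d ∧ x i ≤ μ * x j}, 0 ≤ f₁ x)
    (hf₁pos : ∃ x ∈ {x | x ∈ orthant d ∧ x i ≤ μ * x j}, 0 < f₁ x)
    -- f₁ coincides with φ on K' and does not exceed Φ on K₁ :
    (hcoin : ∀ x ∈ {x | x ∈ orthant d ∧ x i = μ * x j}, f₁ x = φ x)
    (hle : ∀ x ∈ {x | x ∈ orthant d ∧ x i ≤ μ * x j}, f₁ x ≤ φ (proj x))
    -- f₂ defined on K₂ by the polar formula :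
    (f₂ : EuclideanSpace ℝ (Fin d) → ℝ)
    (hf₂def : ∀ y ∈ {x | x ∈ orthant d ∧ μ * x j ≤ x i}, f₂ y =
      sInf ((fun x => (inner ℝ y x : ℝ) / f₁ x) ''
        {x | (x ∈ orthant d ∧ x i ≤ μ * x j) ∧ f₁ x ≠ 0})) :
    (∀ y ∈ {x | x ∈ orthant d ∧ x i = μ * x j}, f₂ y = φ y) ∧
    (∀ y ∈ {x | x ∈ orthant d ∧ μ * x j ≤ x i}, f₂ y ≤ φ (proj y)) := by
  classical
  have hμ2 : (0:ℝ) < 1 + μ^2 := by positivity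
  -- the normal vector to V
  set n : EuclideanSpace ℝ (Fin d) :=
    EuclideanSpace.single i (1:ℝ) - μ • EuclideanSpace.single j 1 with hn
  have hni : n i = 1 := by
    simp [hn, EuclideanSpace.single_apply, hij, hij.symm]
  have hnj : n j = -μ := by
    simp [hn, EuclideanSpace.single_apply, hij, hij.symm]
  have hinner_n : ∀ v : EuclideanSpace ℝ (Fin d), (inner ℝ n v : ℝ) = v i - μ * v j := by
    intro v
    simp only [hn, inner_sub_left, inner_smul_left, EuclideanSpace.inner_single_left,
      RCLike.star_def, conj_trivial, map_one, one_mul]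
  -- explicit formula for proj
  have hproj_eq : ∀ x : EuclideanSpace ℝ (Fin d),
      proj x = x - ((x i - μ * x j)/(1+μ^2)) • n := by
    intro x
    set t : ℝ := (x i - μ * x j)/(1+μ^2) with ht
    set w : EuclideanSpace ℝ (Fin d) := x - proj x with hw
    set v : EuclideanSpace ℝ (Fin d) := w - t • n with hv
    have hwi : w i = x i - proj x i := by simp [hw]
    have hwj : w j = x j - proj x j := by simp [hw]
    have hwij : w i - μ * w j = x i - μ * x j := by
      rw [hwi, hwj, hprojV x]; ring
    have hvV : v i = μ * v j := by
      have hvi : v i = w i - t * 1 := by simp [hv, hni]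
      have hvj : v j = w j - t * (-μ) := by simp [hv, hnj]
      have hteq : t * (1 + μ^2) = x i - μ * x j := by
        rw [ht]; field_simp
      rw [hvi, hvj]
      nlinarith [hwij]
    have h1 : (inner ℝ w v : ℝ) = 0 := hprojorth x v hvV
    have h2 : (inner ℝ n v : ℝ) = 0 := by
      rw [hinner_n v, hvV]; ring
    have h3 : (inner ℝ v v : ℝ) = 0 := by
      rw [hv, inner_sub_left, h1, inner_smul_left]
      have h2' : (inner ℝ n (w - t • n) : ℝ) = 0 := h2
      simp [h2']
    have h4 : v = 0 := by
      rwa [inner_self_eq_zero] at h3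
    have h5 : w = t • n := by
      have h4' := h4
      rw [hv, sub_eq_zero] at h4'
      exact h4'
    have h6 : x - proj x = t • n := by rw [← hw]; exact h5
    calc proj x = x - (x - proj x) := by abel
      _ = x - t • n := by rw [h6]
  have hproj_apply : ∀ (x : EuclideanSpace ℝ (Fin d)) (k : Fin d),
      proj x k = x k - ((x i - μ * x j)/(1+μ^2)) * n k := by
    intro x k
    rw [hproj_eq x]
    simp
  -- proj maps the orthant into K'
  have hproj_orth : ∀ x ∈ orthant d, proj x ∈ orthant d := by
    intro x hx k
    rcases eq_or_ne k i with rfl | hki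
    · rw [hproj_apply, hni]
      have heq : x k - (x k - μ * x j)/(1+μ^2) * 1 = (μ^2 * x k + μ * x j)/(1+μ^2) := by
        field_simp; ring
      rw [heq]
      have := hx k; have := hx j
      positivity
    · rcases eq_or_ne k j with rfl | hkj
      · rw [hproj_apply, hnj]
        have heq : x k - (x i - μ * x k)/(1+μ^2) * (-μ) = (x k + μ * x i)/(1+μ^2) := by
          field_simp; ring
        rw [heq]
        have := hx k; have := hx i
        positivity
      · rw [hproj_apply]
        have : n k = 0 := by
          simp [hn, EuclideanSpace.single_apply, hki, hkj]
        rw [this]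
        simpa using hx k
  have hproj_mem : ∀ x ∈ orthant d, proj x ∈ {x | x ∈ orthant d ∧ x i = μ * x j} := by
    intro x hx
    exact ⟨hproj_orth x hx, hprojV x⟩
  have hproj_id : ∀ y : EuclideanSpace ℝ (Fin d), y i = μ * y j → proj y = y := by
    intro y hy
    rw [hproj_eq y, hy]
    simp
  -- inner products of orthant vectors are nonnegative
  have hip : ∀ x y : EuclideanSpace ℝ (Fin d), x ∈ orthant d → y ∈ orthant d →
      (0:ℝ) ≤ inner ℝ x y := by
    intro x y hx hy
    rw [PiLp.inner_apply]
    apply Finset.sum_nonneg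
    intro k _
    simpa using mul_nonneg (hy k) (hx k)
  -- inner products agree through proj
  have hinner_proj : ∀ (x : EuclideanSpace ℝ (Fin d)),
      ∀ v : EuclideanSpace ℝ (Fin d), v i = μ * v j →
      (inner ℝ x v : ℝ) = inner ℝ (proj x) v := by
    intro x v hv
    have := hprojorth x v hv
    rw [inner_sub_left] at this
    linarith
  -- Lemma A : lower estimate on K'
  have lemA : ∀ y ∈ {x | x ∈ orthant d ∧ x i = μ * x j},
      ∀ x, (x ∈ orthant d ∧ x i ≤ μ * x j) → f₁ x ≠ 0 →
      φ y ≤ (inner ℝ y x : ℝ) / f₁ x := by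
    intro y hy x hx hfx
    have hf₁x : 0 < f₁ x := lt_of_le_of_ne (hf₁nn x hx) (Ne.symm hfx)
    have hpmem : proj x ∈ {x | x ∈ orthant d ∧ x i = μ * x j} := hproj_mem x hx.1
    have hφp : f₁ x ≤ φ (proj x) := hle x hx
    have hφppos : 0 < φ (proj x) := lt_of_lt_of_le hf₁x hφp
    -- scaled point with φ = 1
    set q : EuclideanSpace ℝ (Fin d) := (φ (proj x))⁻¹ • proj x with hq
    have hqmem : q ∈ {x | x ∈ orthant d ∧ x i = μ * x j} := by
      constructor
      · intro k
        simp only [hq, PiLp.smul_apply, smul_eq_mul]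
        exact mul_nonneg (inv_nonneg.mpr hφppos.le) (hpmem.1 k)
      · simp only [hq, PiLp.smul_apply, smul_eq_mul]
        rw [hpmem.2]; ring
    have hφq : φ q = 1 := by
      rw [hq, hφhom (proj x) hpmem _ (inv_nonneg.mpr hφppos.le)]
      field_simp
    have hbdd : BddBelow ((fun x => (inner ℝ y x : ℝ)) ''
        {x | (x ∈ orthant d ∧ x i = μ * x j) ∧ 1 ≤ φ x}) := by
      refine ⟨0, ?_⟩
      rintro _ ⟨z, hz, rfl⟩
      exact hip y z hy.1 hz.1.1
    have hmem : (inner ℝ y q : ℝ) ∈ ((fun x => (inner ℝ y x : ℝ)) ''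
        {x | (x ∈ orthant d ∧ x i = μ * x j) ∧ 1 ≤ φ x}) :=
      ⟨q, ⟨hqmem, hφq.ge⟩, rfl⟩
    have hkey : φ y ≤ (inner ℝ y q : ℝ) := by
      rw [← hφsd y hy]
      exact csInf_le hbdd hmem
    have hinq : (inner ℝ y q : ℝ) = (φ (proj x))⁻¹ * inner ℝ y (proj x) := by
      rw [hq, inner_smul_right]
    have hyx : (inner ℝ y x : ℝ) = inner ℝ y (proj x) := by
      have h1 := real_inner_comm y x
      have h2 := real_inner_comm y (proj x)
      have h3 := hinner_proj x y hy.2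
      linarith
    have hipyx : (0:ℝ) ≤ inner ℝ y x := hip y x hy.1 hx.1
    rw [hinq, ← hyx] at hkey
    calc φ y ≤ (φ (proj x))⁻¹ * inner ℝ y x := hkey
      _ = (inner ℝ y x : ℝ) / φ (proj x) := by rw [div_eq_inv_mul]
      _ ≤ (inner ℝ y x : ℝ) / f₁ x := by gcongr
  -- Lemma B : upper estimate on K₂ (this is the second claim)
  have lemB : ∀ y ∈ {x | x ∈ orthant d ∧ μ * x j ≤ x i}, f₂ y ≤ φ (proj y) := by
    intro y hy
    have hpmem : proj y ∈ {x | x ∈ orthant d ∧ x i = μ * x j} := hproj_mem y hy.1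
    rw [← hφsd (proj y) hpmem]
    -- the φ-dual set is nonempty
    obtain ⟨x₀, hx₀, hφx₀⟩ := hφpos
    have hq₀mem : ((φ x₀)⁻¹ • x₀) ∈ {x | x ∈ orthant d ∧ x i = μ * x j} := by
      constructor
      · intro k
        simp only [PiLp.smul_apply, smul_eq_mul]
        exact mul_nonneg (inv_nonneg.mpr hφx₀.le) (hx₀.1 k)
      · simp only [PiLp.smul_apply, smul_eq_mul]
        rw [hx₀.2]; ring
    have hφq₀ : φ ((φ x₀)⁻¹ • x₀) = 1 := by
      rw [hφhom x₀ hx₀ _ (inv_nonneg.mpr hφx₀.le)]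
      field_simp
    apply le_csInf
    · exact ⟨_, ⟨_, ⟨hq₀mem, hφq₀.ge⟩, rfl⟩⟩
    rintro _ ⟨x, ⟨hxK, hφx⟩, rfl⟩
    -- x ∈ K' with φ x ≥ 1; show f₂ y ≤ ⟨proj y, x⟩
    have hxK₁ : x ∈ orthant d ∧ x i ≤ μ * x j := ⟨hxK.1, hxK.2.le⟩
    have hf₁x : f₁ x = φ x := hcoin x hxK
    have hf₁x1 : (1:ℝ) ≤ f₁ x := by rw [hf₁x]; exact hφx
    have hf₁ne : f₁ x ≠ 0 := by positivity
    have hbddS : BddBelow ((fun x => (inner ℝ y x : ℝ) / f₁ x) ''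
        {x | (x ∈ orthant d ∧ x i ≤ μ * x j) ∧ f₁ x ≠ 0}) := by
      refine ⟨0, ?_⟩
      rintro _ ⟨z, hz, rfl⟩
      have hz0 : 0 < f₁ z := lt_of_le_of_ne (hf₁nn z hz.1) (Ne.symm hz.2)
      exact div_nonneg (hip y z hy.1 hz.1.1) hz0.le
    have hmemS : (inner ℝ y x : ℝ) / f₁ x ∈ ((fun x => (inner ℝ y x : ℝ) / f₁ x) ''
        {x | (x ∈ orthant d ∧ x i ≤ μ * x j) ∧ f₁ x ≠ 0}) :=
      ⟨x, ⟨hxK₁, hf₁ne⟩, rfl⟩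
    have h1 : f₂ y ≤ (inner ℝ y x : ℝ) / f₁ x := by
      rw [hf₂def y hy]
      exact csInf_le hbddS hmemS
    have hipyx : (0:ℝ) ≤ inner ℝ y x := hip y x hy.1 hxK.1
    have h2 : (inner ℝ y x : ℝ) / f₁ x ≤ inner ℝ y x :=
      div_le_self hipyx hf₁x1
    have h3 : (inner ℝ y x : ℝ) = inner ℝ (proj y) x := hinner_proj y x hxK.2
    calc f₂ y ≤ (inner ℝ y x : ℝ) / f₁ x := h1
      _ ≤ (inner ℝ y x : ℝ) := h2
      _ = (inner ℝ (proj y) x : ℝ) := h3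
  constructor
  · intro y hy
    have hyK₂ : y ∈ {x | x ∈ orthant d ∧ μ * x j ≤ x i} := ⟨hy.1, hy.2.ge⟩
    have hub : f₂ y ≤ φ y := by
      have := lemB y hyK₂
      rwa [hproj_id y hy.2] at this
    have hlb : φ y ≤ f₂ y := by
      rw [hf₂def y hyK₂]
      apply le_csInf
      · obtain ⟨x₀, hx₀, hf₁x₀⟩ := hf₁pos
        exact ⟨_, ⟨x₀, ⟨hx₀, hf₁x₀.ne'⟩, rfl⟩⟩
      rintro _ ⟨x, ⟨hxK₁, hfx⟩, rfl⟩
      exact lemA y hy x hxK₁ hfx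
    linarith
  · exact lemB
end

section
/- If the splitting hyperplane V coincides with a coordinate hyperplane of ℝ^d₊ (say x_d = 0), then any antinorm f₁ on K₁ = ℝ^d₊ that coincides with φ on V ∩ ℝ^d₊ and satisfies f₁ ≤ Φ must equal Φ, the orthogonal extension of φ: f₁(x', x_d) = φ(x') for all x. -/
/-- If the splitting hyperplane is the coordinate hyperplane {x_d = 0} of
ℝ^d₊, then any antinorm f₁ on K₁ = ℝ^d₊ coinciding on K' = {x ∈ ℝ^d₊ : x_d = 0}
with an antinorm φ and satisfying f₁ ≤ Φ (the orthogonal extension of φ)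
must equal Φ: f₁(x', x_d) = φ(x') for all x ∈ ℝ^d₊. -/
theorem stmt_19 {d : ℕ} (φ f₁ : EuclideanSpace ℝ (Fin (d + 1)) → ℝ)
    -- φ is an antinorm on K' = {x ∈ ℝ^{d+1}₊ : x_d = 0} :
    (hφconc : ConcaveOn ℝ {x | x ∈ orthant (d + 1) ∧ x (Fin.last d) = 0} φ)
    (hφhom : ∀ x ∈ {x | x ∈ orthant (d + 1) ∧ x (Fin.last d) = 0}, ∀ c : ℝ,
      0 ≤ c → φ (c • x) = c * φ x)
    (hφnn : ∀ x ∈ {x | x ∈ orthant (d + 1) ∧ x (Fin.last d) = 0}, 0 ≤ φ x)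
    (hφpos : ∃ x ∈ {x | x ∈ orthant (d + 1) ∧ x (Fin.last d) = 0}, 0 < φ x)
    -- f₁ is an antinorm on K₁ = ℝ^{d+1}₊ :
    (hf₁conc : ConcaveOn ℝ (orthant (d + 1)) f₁)
    (hf₁hom : ∀ x ∈ orthant (d + 1), ∀ c : ℝ, 0 ≤ c → f₁ (c • x) = c * f₁ x)
    (hf₁nn : ∀ x ∈ orthant (d + 1), 0 ≤ f₁ x)
    (hf₁pos : ∃ x ∈ orthant (d + 1), 0 < f₁ x)
    -- f₁ coincides with φ on K' :
    (hcoin : ∀ x ∈ {x | x ∈ orthant (d + 1) ∧ x (Fin.last d) = 0}, f₁ x = φ x)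
    -- f₁ does not exceed the orthogonal extension Φ of φ :
    (hle : ∀ x ∈ orthant (d + 1),
      f₁ x ≤ φ (WithLp.toLp 2 (Function.update x (Fin.last d) 0))) :
    ∀ x ∈ orthant (d + 1), f₁ x = φ (WithLp.toLp 2 (Function.update x (Fin.last d) 0)) := by
  intro x hx
  set L := Fin.last d with hL
  set x' := WithLp.toLp 2 (Function.update x L 0) with hx'def
  have hx'mem : x' ∈ orthant (d + 1) := by
    intro i
    by_cases h : i = L
    · subst h; simp [hx'def]
    · rw [hx'def, WithLp.ofLp_toLp, Function.update_of_ne h]; exact hx i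
  have hx'K : x' ∈ {y | y ∈ orthant (d + 1) ∧ y L = 0} := ⟨hx'mem, by simp [hx'def]⟩
  have hφx' : 0 ≤ φ x' := hφnn _ hx'K
  refine le_antisymm (hle x hx) ?_
  by_contra hlt
  push_neg at hlt
  set t := x L with htdef
  have ht : 0 ≤ t := hx L
  set δ := φ x' - f₁ x with hδ
  have hδpos : 0 < δ := by linarith
  obtain ⟨n, hn⟩ := exists_nat_gt (φ x' / δ)
  set N : ℝ := (n : ℝ) + 1 with hN
  have hN1 : (1 : ℝ) ≤ N := by
    have : (0:ℝ) ≤ (n:ℝ) := Nat.cast_nonneg n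
    linarith
  have hNpos : (0 : ℝ) < N := by linarith
  have hNgt : φ x' / δ < N := by
    have : (0:ℝ) ≤ (n:ℝ) := Nat.cast_nonneg n
    linarith
  set y := WithLp.toLp 2 (Function.update x L (N * t)) with hydef
  have hymem : y ∈ orthant (d + 1) := by
    intro i
    by_cases h : i = L
    · subst h; rw [hydef, WithLp.ofLp_toLp, Function.update_self]; positivity
    · rw [hydef, WithLp.ofLp_toLp, Function.update_of_ne h]; exact hx i
  have hcomb : (1 - 1 / N) • x' + (1 / N) • y = x := by
    ext i
    by_cases h : i = L
    · subst h
      simp only [WithLp.ofLp_add, WithLp.ofLp_smul, WithLp.ofLp_toLp, Pi.add_apply, Pi.smul_apply, hx'def, hydef,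
        Function.update_self, smul_eq_mul, htdef]
      field_simp
      ring
    · simp only [WithLp.ofLp_add, WithLp.ofLp_smul, WithLp.ofLp_toLp, Pi.add_apply, Pi.smul_apply, hx'def, hydef,
        Function.update_of_ne h, smul_eq_mul]
      ring
  have ha : (0:ℝ) ≤ 1 - 1 / N := by
    have : 1 / N ≤ 1 := by
      rw [div_le_one hNpos]; exact hN1
    linarith
  have hb : (0:ℝ) ≤ 1 / N := by positivity
  have hconc := hf₁conc.2 hx'mem hymem ha hb (by ring)
  rw [hcomb] at hconc
  have hfy : 0 ≤ f₁ y := hf₁nn y hymem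
  have hfx' : f₁ x' = φ x' := hcoin x' hx'K
  have h1 : (1 - 1 / N) * φ x' ≤ f₁ x := by
    have := hconc
    simp only [smul_eq_mul, hfx'] at this
    nlinarith
  have hNne : N ≠ 0 := ne_of_gt hNpos
  have key : (N - 1) * φ x' ≤ N * f₁ x := by
    calc (N - 1) * φ x' = N * ((1 - 1 / N) * φ x') := by field_simp
      _ ≤ N * f₁ x := mul_le_mul_of_nonneg_left h1 hNpos.le
  have h2 : N * δ ≤ φ x' := by
    have e : N * δ = N * φ x' - N * f₁ x := by rw [hδ]; ring
    linarith
  have : φ x' < N * δ := (div_lt_iff₀ hδpos).mp hNgt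
  linarith
end
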